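/- For each n, let I_n ⊆ ℝ^n be a nonempty closed convex cone containing a linear subspace S_n of fixed dimension k (not depending on n), let D_n := −I_n, and let θ₀ⁿ ∈ S_n. Let Yₙ := θ₀ⁿ + σεₙ, where σ > 0 and εₙ has i.i.d. coordinates of mean 0 and variance 1. Assume the consistency conditions ‖Π(θ₀ⁿ + σεₙ|I_n) − θ₀ⁿ‖² = o_p(n) and ‖Π(θ₀ⁿ + σεₙ|D_n) − θ₀ⁿ‖² = o_p(n). Then the double-cone statistic satisfies T(Yₙ) = o_p(1). -/

import Mathlib

set_option maxHeartbeats 1000000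

open MeasureTheory Filter
open scoped ProbabilityTheory

/-- The metric projection onto a subset `K` of `ℝⁿ`: the (for nonempty closed convex `K`,
unique) point of `K` nearest to `y`. -/
noncomputable def proj {n : ℕ} (K : Set (EuclideanSpace ℝ (Fin n)))
    (y : EuclideanSpace ℝ (Fin n)) : EuclideanSpace ℝ (Fin n) := by
  classical exact if h : ∃ p ∈ K, ∀ q ∈ K, ‖y - p‖ ≤ ‖y - q‖ then h.choose else 0

/-- The double-cone statistic
`T(y) := max{‖Π(y|S) − Π(y|I)‖², ‖Π(y|S) − Π(y|D)‖²} / ‖y − Π(y|S)‖²` for `y ∉ S`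
(and `T(y) := 0` for `y ∈ S`). -/
noncomputable def Tstat {n : ℕ} (S I D : Set (EuclideanSpace ℝ (Fin n)))
    (y : EuclideanSpace ℝ (Fin n)) : ℝ := by
  classical exact if y ∈ S then 0
    else max (‖proj S y - proj I y‖ ^ 2) (‖proj S y - proj D y‖ ^ 2) / ‖y - proj S y‖ ^ 2

/-- `X n = o_p(a n)`: `P(|X n| > δ a n) → 0` for every `δ > 0`. -/
def smallOp {Ω : Type*} [MeasurableSpace Ω] (P : Measure Ω)
    (X : ℕ → Ω → ℝ) (a : ℕ → ℝ) : Prop :=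
  ∀ δ : ℝ, 0 < δ → Tendsto (fun n => P {ω | δ * a n < |X n ω|}) atTop (nhds 0)

section Aux

open ProbabilityTheory

lemma proj_spec {n : ℕ} {K : Set (EuclideanSpace ℝ (Fin n))} (hne : K.Nonempty)
    (hcl : IsClosed K) (hcv : Convex ℝ K) (y : EuclideanSpace ℝ (Fin n)) :
    proj K y ∈ K ∧ ∀ q ∈ K, ‖y - proj K y‖ ≤ ‖y - q‖ := by
  have hex : ∃ p ∈ K, ∀ q ∈ K, ‖y - p‖ ≤ ‖y - q‖ := by
    obtain ⟨v, hv, hvm⟩ := exists_norm_eq_iInf_of_complete_convex hne hcl.isComplete hcv y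
    refine ⟨v, hv, fun q hq => ?_⟩
    rw [hvm]
    exact ciInf_le ⟨0, Set.forall_mem_range.2 fun _ => norm_nonneg _⟩ (⟨q, hq⟩ : K)
  unfold proj
  rw [dif_pos hex]
  exact hex.choose_spec

lemma Tstat_nonneg {n : ℕ} (S I D : Set (EuclideanSpace ℝ (Fin n)))
    (y : EuclideanSpace ℝ (Fin n)) : 0 ≤ Tstat S I D y := by
  unfold Tstat
  split
  · exact le_refl 0
  · exact div_nonneg (le_max_iff.2 (Or.inl (sq_nonneg _))) (sq_nonneg _)

lemma proj_orth' {n : ℕ} (S : Submodule ℝ (EuclideanSpace ℝ (Fin n)))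
    (y p : EuclideanSpace ℝ (Fin n))
    (hmem : p ∈ S)
    (hmin : ∀ q ∈ (S : Set (EuclideanSpace ℝ (Fin n))), ‖y - p‖ ≤ ‖y - q‖) :
    ∀ w ∈ S, (inner ℝ (y - p) w : ℝ) = 0 := by
  haveI : Nonempty (S : Set (EuclideanSpace ℝ (Fin n))) := ⟨⟨0, S.zero_mem⟩⟩
  have hbdd : BddBelow (Set.range fun w : (S : Set (EuclideanSpace ℝ (Fin n))) =>
      ‖y - (w : EuclideanSpace ℝ (Fin n))‖) := by
    refine ⟨0, ?_⟩
    rintro x ⟨w, rfl⟩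
    exact norm_nonneg _
  have h : ‖y - p‖ = ⨅ w : (S : Set (EuclideanSpace ℝ (Fin n))), ‖y - w‖ := by
    apply le_antisymm
    · exact le_ciInf fun w => hmin w w.2
    · exact ciInf_le hbdd ⟨p, hmem⟩
  exact (Submodule.norm_eq_iInf_iff_real_inner_eq_zero S hmem).1 h

lemma det_bound {n : ℕ} (S : Submodule ℝ (EuclideanSpace ℝ (Fin n)))
    (θ₀ : EuclideanSpace ℝ (Fin n)) (hθ₀ : θ₀ ∈ S)
    (y pS pI pD : EuclideanSpace ℝ (Fin n))
    (hpSmem : pS ∈ S)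
    (hpSmin : ∀ q ∈ (S : Set (EuclideanSpace ℝ (Fin n))), ‖y - pS‖ ≤ ‖y - q‖)
    (hIS : ‖y - pI‖ ≤ ‖y - pS‖)
    {s : ℝ} (hs0 : 0 ≤ s) (hs2 : s ≤ 1/2)
    (he : 0 < ‖y - θ₀‖)
    (hRI : ‖pI - θ₀‖ ≤ s * ‖y - θ₀‖)
    (hRD : ‖pD - θ₀‖ ≤ s * ‖y - θ₀‖) :
    max (‖pS - pI‖ ^ 2) (‖pS - pD‖ ^ 2) / ‖y - pS‖ ^ 2 ≤ 20 * s := by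
  set e := ‖y - θ₀‖ with he'
  set a := ‖y - pS‖ with ha'
  set b := ‖pS - θ₀‖ with hb'
  set rI := ‖pI - θ₀‖ with hrI'
  set rD := ‖pD - θ₀‖ with hrD'
  have horth := proj_orth' S y pS hpSmem hpSmin
  have pyth : e ^ 2 = a ^ 2 + b ^ 2 := by
    have hd : y - θ₀ = (y - pS) + (pS - θ₀) := by abel
    rw [he', hd, norm_add_sq_real, horth (pS - θ₀) (S.sub_mem hpSmem hθ₀)]
    ring
  have hlow : (1 - s) * e ≤ ‖y - pI‖ := by
    have htri : e ≤ ‖y - pI‖ + rI := by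
      calc e = ‖(y - pI) + (pI - θ₀)‖ := by rw [he']; congr 1; abel
        _ ≤ ‖y - pI‖ + rI := norm_add_le _ _
    nlinarith [hRI]
  have hq2 : ((1 - s) * e) ^ 2 ≤ a ^ 2 := by
    have h0 : 0 ≤ (1 - s) * e := mul_nonneg (by linarith) he.le
    exact pow_le_pow_left₀ h0 (hlow.trans hIS) 2
  have hb2 : b ^ 2 ≤ 2 * s * e ^ 2 := by
    nlinarith [mul_nonneg (mul_nonneg hs0 hs0) (sq_nonneg e)]
  have ha2 : e ^ 2 / 4 ≤ a ^ 2 := by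
    refine le_trans ?_ hq2
    nlinarith [mul_nonneg (mul_nonneg (by linarith : (0:ℝ) ≤ 1/2 - s) (by linarith : (0:ℝ) ≤ 3/2 - s)) (sq_nonneg e)]
  have hrI0 : 0 ≤ rI := norm_nonneg _
  have hrD0 : 0 ≤ rD := norm_nonneg _
  have hrI2 : rI ^ 2 ≤ (s*e) ^ 2 := pow_le_pow_left₀ hrI0 hRI 2
  have hrD2 : rD ^ 2 ≤ (s*e) ^ 2 := pow_le_pow_left₀ hrD0 hRD 2
  have hs2e : 2 * (s*e)^2 ≤ s * e^2 := by
    nlinarith [mul_nonneg (mul_nonneg hs0 (by linarith : (0:ℝ) ≤ 1 - 2*s)) (sq_nonneg e)]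
  have hA2 : ‖pS - pI‖ ^ 2 ≤ 5 * s * e ^ 2 := by
    have htri : ‖pS - pI‖ ≤ b + rI := by
      calc ‖pS - pI‖ = ‖(pS - θ₀) + (θ₀ - pI)‖ := by congr 1; abel
        _ ≤ b + ‖θ₀ - pI‖ := norm_add_le _ _
        _ = b + rI := by rw [hrI', norm_sub_rev]
    have h1 : ‖pS - pI‖ ^ 2 ≤ (b + rI) ^ 2 := pow_le_pow_left₀ (norm_nonneg _) htri 2
    nlinarith [sq_nonneg (b - rI)]
  have hB2 : ‖pS - pD‖ ^ 2 ≤ 5 * s * e ^ 2 := by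
    have htri : ‖pS - pD‖ ≤ b + rD := by
      calc ‖pS - pD‖ = ‖(pS - θ₀) + (θ₀ - pD)‖ := by congr 1; abel
        _ ≤ b + ‖θ₀ - pD‖ := norm_add_le _ _
        _ = b + rD := by rw [hrD', norm_sub_rev]
    have h1 : ‖pS - pD‖ ^ 2 ≤ (b + rD) ^ 2 := pow_le_pow_left₀ (norm_nonneg _) htri 2
    nlinarith [sq_nonneg (b - rD)]
  have hden : (0:ℝ) < e ^ 2 / 4 := by positivity
  have hnum : (0:ℝ) ≤ 5 * s * e ^ 2 := by positivity
  calc max (‖pS - pI‖ ^ 2) (‖pS - pD‖ ^ 2) / a ^ 2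
      ≤ (5 * s * e ^ 2) / (e ^ 2 / 4) := div_le_div₀ hnum (max_le hA2 hB2) hden ha2
    _ = 20 * s := by
        field_simp
        ring

lemma pi_single_set {n : ℕ} (μ : Measure ℝ) [IsProbabilityMeasure μ] (i : Fin n)
    {s : Set ℝ} (hs : MeasurableSet s) :
    (Measure.pi fun _ : Fin n => μ) ((fun x : Fin n → ℝ => x i) ⁻¹' s) = μ s := by
  classical
  have h1 : (fun x : Fin n → ℝ => x i) ⁻¹' s
      = Set.pi Set.univ (fun l => if l = i then s else Set.univ) := by
    ext x
    simp only [Set.mem_preimage, Set.mem_univ_pi]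
    constructor
    · intro hx l
      by_cases h : l = i <;> simp [h, hx]
    · intro hx
      simpa using hx i
  rw [h1, Measure.pi_pi]
  have h2 : ∀ l : Fin n, μ (if l = i then s else Set.univ) = if l = i then μ s else 1 := by
    intro l; split <;> simp
  rw [Finset.prod_congr rfl fun l _ => h2 l]
  simp [Finset.prod_ite_eq']

lemma map_eval {n : ℕ} (μ : Measure ℝ) [IsProbabilityMeasure μ] (i : Fin n) :
    Measure.map (fun x : Fin n → ℝ => x i) (Measure.pi fun _ : Fin n => μ) = μ := by
  ext s hs
  rw [Measure.map_apply (measurable_pi_apply i) hs, pi_single_set μ i hs]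

lemma integral_eval {n : ℕ} (μ : Measure ℝ) [IsProbabilityMeasure μ] (i : Fin n)
    (f : ℝ → ℝ) (hf : Measurable f) :
    ∫ x, f (x i) ∂(Measure.pi fun _ : Fin n => μ) = ∫ t, f t ∂μ := by
  have h := integral_map (μ := Measure.pi fun _ : Fin n => μ)
    (measurable_pi_apply i).aemeasurable (f := f) hf.aestronglyMeasurable
  rw [map_eval] at h
  exact h.symm

lemma coord_indep {n : ℕ} (μ : Measure ℝ) [IsProbabilityMeasure μ]
    {i j : Fin n} (hij : i ≠ j) :
    IndepFun (fun x : Fin n → ℝ => x i) (fun x : Fin n → ℝ => x j)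
      (Measure.pi fun _ : Fin n => μ) := by
  classical
  rw [indepFun_iff_measure_inter_preimage_eq_mul]
  intro s t hs ht
  rw [pi_single_set μ i hs, pi_single_set μ j ht]
  have h1 : (fun x : Fin n → ℝ => x i) ⁻¹' s ∩ (fun x : Fin n → ℝ => x j) ⁻¹' t
      = Set.pi Set.univ (fun l => if l = i then s else if l = j then t else Set.univ) := by
    ext x
    simp only [Set.mem_inter_iff, Set.mem_preimage, Set.mem_univ_pi]
    constructor
    · rintro ⟨hxi, hxj⟩ l
      by_cases h : l = i
      · simp [h, hxi]
      · by_cases h' : l = j <;> simp [h, h', hij.symm, hxj]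
    · intro hx
      refine ⟨?_, ?_⟩
      · simpa using hx i
      · have := hx j
        simp only [if_neg hij.symm, if_pos rfl] at this
        exact this
  rw [h1, Measure.pi_pi]
  have h2 : ∀ l : Fin n, μ (if l = i then s else if l = j then t else Set.univ)
      = if l = i then μ s else if l = j then μ t else 1 := by
    intro l; split
    · rfl
    · split <;> simp
  rw [Finset.prod_congr rfl fun l _ => h2 l]
  rw [← Finset.mul_prod_erase Finset.univ _ (Finset.mem_univ i),
    ← Finset.mul_prod_erase _ _ (Finset.mem_erase.2 ⟨hij.symm, Finset.mem_univ j⟩)]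
  rw [if_pos rfl, if_neg hij.symm, if_pos rfl]
  rw [Finset.prod_eq_one, mul_one]
  intro l hl
  rw [Finset.mem_erase, Finset.mem_erase] at hl
  rw [if_neg hl.2.1, if_neg hl.1]

lemma wlln (μ : Measure ℝ) [IsProbabilityMeasure μ] (hvar : ∫ x, x ^ 2 ∂μ = 1) :
    Tendsto (fun n : ℕ => (Measure.pi fun _ : Fin n => μ) {x | ∑ i, x i ^ 2 < (n : ℝ) / 2})
      atTop (nhds 0) := by
  have hint : Integrable (fun t : ℝ => t ^ 2) μ := by
    by_contra h
    rw [integral_undef h] at hvar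
    norm_num at hvar
  have hWmeas : ∀ M : ℕ, Measurable (fun t : ℝ => min (t ^ 2) (M : ℝ)) := fun M =>
    ((continuous_pow 2).min continuous_const).measurable
  have hW0 : ∀ (M : ℕ) (t : ℝ), 0 ≤ min (t ^ 2) (M : ℝ) := fun M t =>
    le_min (sq_nonneg t) (Nat.cast_nonneg M)
  have hWint : ∀ M : ℕ, Integrable (fun t : ℝ => min (t ^ 2) (M : ℝ)) μ := by
    intro M
    refine hint.mono (hWmeas M).aestronglyMeasurable (ae_of_all _ fun t => ?_)
    rw [Real.norm_eq_abs, Real.norm_eq_abs, abs_of_nonneg (hW0 M t), abs_of_nonneg (sq_nonneg t)]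
    exact min_le_left _ _
  have htd : Tendsto (fun M : ℕ => ∫ t, min (t ^ 2) (M : ℝ) ∂μ) atTop (nhds 1) := by
    rw [← hvar]
    refine integral_tendsto_of_tendsto_of_monotone hWint hint (ae_of_all _ fun t => ?_)
      (ae_of_all _ fun t => ?_)
    · intro a b hab
      exact min_le_min le_rfl (Nat.cast_le.2 hab)
    · refine tendsto_atTop_of_eventually_const (i₀ := ⌈t ^ 2⌉₊) fun M hM => ?_
      exact min_eq_left ((Nat.le_ceil _).trans (Nat.cast_le.2 hM))
  obtain ⟨M, hM34⟩ : ∃ M : ℕ, 3/4 ≤ ∫ t, min (t ^ 2) (M : ℝ) ∂μ := by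
    have := htd.eventually (eventually_gt_nhds (by norm_num : (3/4 : ℝ) < 1))
    obtain ⟨M, hM⟩ := this.exists
    exact ⟨M, hM.le⟩
  set W : ℝ → ℝ := fun t => min (t ^ 2) (M : ℝ) with hW
  set m : ℝ := ∫ t, W t ∂μ with hm
  have key : ∀ n : ℕ, 1 ≤ n →
      (Measure.pi fun _ : Fin n => μ) {x | ∑ i, x i ^ 2 < (n : ℝ) / 2}
        ≤ ENNReal.ofReal (16 * (M:ℝ) ^ 2 / n) := by
    intro n hn
    set πn : Measure (Fin n → ℝ) := Measure.pi fun _ : Fin n => μ with hπn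
    have hn0 : (0 : ℝ) < n := by exact_mod_cast hn
    set Y : Fin n → (Fin n → ℝ) → ℝ := fun l x => W (x l) with hY
    have hYmeas : ∀ l, Measurable (Y l) := fun l => (hWmeas M).comp (measurable_pi_apply l)
    have hYmem : ∀ l, MemLp (Y l) 2 πn := by
      intro l
      refine MemLp.of_bound (hYmeas l).aestronglyMeasurable (M : ℝ) (ae_of_all _ fun x => ?_)
      rw [Real.norm_eq_abs, abs_of_nonneg (hW0 M (x l))]
      exact min_le_right _ _
    have hpair : (↑(Finset.univ : Finset (Fin n)) : Set (Fin n)).Pairwise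
        fun i j => IndepFun (Y i) (Y j) πn := by
      intro i _ j _ hij
      exact (coord_indep μ hij).comp (hWmeas M) (hWmeas M)
    have hvarsum : variance (∑ l, Y l) πn = ∑ l, variance (Y l) πn :=
      IndepFun.variance_sum (fun l _ => hYmem l) hpair
    have hvarY : ∀ l, variance (Y l) πn ≤ (M:ℝ) ^ 2 := by
      intro l
      refine (variance_le_expectation_sq (hYmeas l).aestronglyMeasurable).trans ?_
      have h1 : ∫ x, (Y l ^ 2) x ∂πn ≤ ∫ x, ((M:ℝ) ^ 2) ∂πn := by
        refine integral_mono ((hYmem l).integrable_sq) (integrable_const _) fun x => ?_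
        simp only [Pi.pow_apply]
        exact pow_le_pow_left₀ (hW0 M (x l)) (min_le_right _ _) 2
      simpa using h1
    have hvartot : variance (∑ l, Y l) πn ≤ n * (M:ℝ) ^ 2 := by
      rw [hvarsum]
      calc (∑ l, variance (Y l) πn) ≤ ∑ _l : Fin n, (M:ℝ) ^ 2 :=
            Finset.sum_le_sum fun l _ => hvarY l
        _ = n * (M:ℝ) ^ 2 := by simp [Finset.sum_const, nsmul_eq_mul]
    have hEY : ∀ l, ∫ x, Y l x ∂πn = m := fun l => integral_eval μ l W (hWmeas M)
    have hEsum : (∫ x, (∑ l, Y l) x ∂πn) = n * m := by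
      have h1 : (∫ x, (∑ l, Y l) x ∂πn) = ∫ x, ∑ l, Y l x ∂πn := by
        congr 1
        ext x
        simp [Finset.sum_apply]
      rw [h1, integral_finset_sum _ fun l _ => (hYmem l).integrable one_le_two]
      simp [hEY, Finset.sum_const, nsmul_eq_mul]
    have hcheb := meas_ge_le_variance_div_sq (μ := πn)
      (memLp_finset_sum' _ fun l (_ : l ∈ Finset.univ) => hYmem l)
      (by positivity : (0:ℝ) < n / 4)
    have hincl : {x : Fin n → ℝ | ∑ i, x i ^ 2 < (n : ℝ) / 2}
        ⊆ {x | (n : ℝ) / 4 ≤ |(∑ l, Y l) x - πn[∑ l, Y l]|} := by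
      intro x hx
      simp only [Set.mem_setOf_eq] at hx ⊢
      have hYle : (∑ l, Y l) x ≤ ∑ i, x i ^ 2 := by
        rw [Finset.sum_apply]
        exact Finset.sum_le_sum fun l _ => min_le_left _ _
      have hmn : (3/4 : ℝ) * n ≤ (n:ℝ) * m := by
        rw [mul_comm (n:ℝ) m]
        exact mul_le_mul_of_nonneg_right hM34 hn0.le
      rw [show πn[∑ l, Y l] = (n : ℝ) * m from hEsum]
      rw [abs_sub_comm, le_abs]
      left
      linarith
    refine (measure_mono hincl).trans (hcheb.trans ?_)
    refine ENNReal.ofReal_le_ofReal ?_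
    have hp4 : (0:ℝ) < ((n:ℝ)/4) ^ 2 := by positivity
    have h2 : variance (∑ l, Y l) πn / ((n:ℝ)/4) ^ 2 ≤ ((n:ℝ) * (M:ℝ)^2) / ((n:ℝ)/4) ^ 2 :=
      (div_le_div_iff_of_pos_right hp4).2 hvartot
    have h3 : ((n:ℝ) * (M:ℝ)^2) / ((n:ℝ)/4) ^ 2 = 16 * (M:ℝ) ^ 2 / n := by
      field_simp
      ring
    exact h2.trans_eq h3
  have hub : Tendsto (fun n : ℕ => ENNReal.ofReal (16 * (M:ℝ) ^ 2 / n)) atTop (nhds 0) := by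
    have h0 : Tendsto (fun n : ℕ => 16 * (M:ℝ) ^ 2 / n) atTop (nhds 0) :=
      tendsto_const_div_atTop_nhds_zero_nat _
    have := ENNReal.tendsto_ofReal h0
    simpa using this
  refine tendsto_of_tendsto_of_tendsto_of_le_of_le' tendsto_const_nhds hub
    (Eventually.of_forall fun n => zero_le) ?_
  filter_upwards [eventually_ge_atTop 1] with n hn
  exact key n hn

lemma euclidean_norm_sq {n : ℕ} (v : EuclideanSpace ℝ (Fin n)) :
    ‖v‖ ^ 2 = ∑ i, v i ^ 2 := by
  have h : ∑ i, ‖v i‖ ^ 2 = ∑ i, v i ^ 2 := by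
    simp [Real.norm_eq_abs, sq_abs]
  rw [EuclideanSpace.norm_eq, ← h, Real.sq_sqrt]
  exact Finset.sum_nonneg fun i _ => sq_nonneg _

end Aux

/-- Theorem under H₀: with `I_n` nonempty closed convex cones containing
linear subspaces `S_n` of fixed dimension `k`, `D_n = −I_n`, `θ₀ⁿ ∈ S_n`,
`Yₙ = θ₀ⁿ + σεₙ` with i.i.d. mean-0 variance-1 coordinates, and the consistency conditions
`‖Π(Yₙ|I_n) − θ₀ⁿ‖² = o_p(n)` and `‖Π(Yₙ|D_n) − θ₀ⁿ‖² = o_p(n)`, the double-cone statistic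
satisfies `T(Yₙ) = o_p(1)`. -/
theorem stmt8 {Ω : Type*} [MeasureSpace Ω] [IsProbabilityMeasure (ℙ : Measure Ω)]
    (k : ℕ)
    (I : ∀ n : ℕ, Set (EuclideanSpace ℝ (Fin n)))
    (hne : ∀ n, (I n).Nonempty) (hclosed : ∀ n, IsClosed (I n))
    (hconv : ∀ n, Convex ℝ (I n))
    (hcone : ∀ n, ∀ θ ∈ I n, ∀ t : ℝ, 0 < t → t • θ ∈ I n)
    (S : ∀ n : ℕ, Submodule ℝ (EuclideanSpace ℝ (Fin n)))
    (hSdim : ∀ n, Module.finrank ℝ (S n) = k)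
    (hSI : ∀ n, (S n : Set (EuclideanSpace ℝ (Fin n))) ⊆ I n)
    (θ₀ : ∀ n : ℕ, EuclideanSpace ℝ (Fin n)) (hθ₀ : ∀ n, θ₀ n ∈ S n)
    (σ : ℝ) (hσ : 0 < σ)
    (ε : ∀ n : ℕ, Ω → EuclideanSpace ℝ (Fin n))
    (μ : Measure ℝ) [IsProbabilityMeasure μ]
    (hiid : ∀ n, Measure.map (fun ω i => ε n ω i) ℙ = Measure.pi fun _ : Fin n => μ)
    (hmean : ∫ x, x ∂μ = 0) (hvar : ∫ x, x ^ 2 ∂μ = 1)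
    (hconsI : smallOp ℙ
      (fun n ω => ‖proj (I n) (θ₀ n + σ • ε n ω) - θ₀ n‖ ^ 2) (fun n => (n : ℝ)))
    (hconsD : smallOp ℙ
      (fun n ω => ‖proj (-(I n)) (θ₀ n + σ • ε n ω) - θ₀ n‖ ^ 2) (fun n => (n : ℝ))) :
    smallOp ℙ
      (fun n ω => Tstat (S n : Set (EuclideanSpace ℝ (Fin n))) (I n) (-(I n))
        (θ₀ n + σ • ε n ω))
      (fun _ => (1 : ℝ)) := by
  intro δ hδ
  set c : ℝ := σ ^ 2 / 2 with hc
  have hc0 : 0 < c := by positivity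
  set s : ℝ := min (1/2) (δ/20) with hs
  have hs0 : 0 < s := lt_min (by norm_num) (by positivity)
  have hs2 : s ≤ 1/2 := min_le_left _ _
  have hsδ : 20 * s ≤ δ := by
    have h := min_le_right (1/2 : ℝ) (δ/20)
    have : s ≤ δ / 20 := h
    linarith
  set η : ℝ := c * s ^ 2 with hη
  have hη0 : 0 < η := by positivity
  have h1 := hconsI η hη0
  have h2 := hconsD η hη0
  -- the law-of-large-numbers event
  have hAmeas : ∀ n : ℕ, MeasurableSet {x : Fin n → ℝ | ∑ i, x i ^ 2 < (n : ℝ) / 2} := by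
    intro n
    exact measurableSet_lt
      (Finset.measurable_sum _ fun i _ => (measurable_pi_apply i).pow_const 2) measurable_const
  have haem : ∀ n : ℕ, AEMeasurable (fun ω (i : Fin n) => ε n ω i) ℙ := by
    intro n
    by_contra h
    have h0 := Measure.map_of_not_aemeasurable h
    rw [hiid n] at h0
    have h1 : (Measure.pi fun _ : Fin n => μ) Set.univ = 1 := measure_univ
    rw [h0] at h1
    simp at h1
  have h3 : Tendsto (fun n : ℕ =>
      ℙ ((fun ω (i : Fin n) => ε n ω i) ⁻¹' {x : Fin n → ℝ | ∑ i, x i ^ 2 < (n : ℝ) / 2}))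
      atTop (nhds 0) := by
    have heq : ∀ n : ℕ,
        ℙ ((fun ω (i : Fin n) => ε n ω i) ⁻¹' {x : Fin n → ℝ | ∑ i, x i ^ 2 < (n : ℝ) / 2})
        = (Measure.pi fun _ : Fin n => μ) {x : Fin n → ℝ | ∑ i, x i ^ 2 < (n : ℝ) / 2} := by
      intro n
      rw [← hiid n, Measure.map_apply_of_aemeasurable (haem n) (hAmeas n)]
    simp only [heq]
    exact wlln μ hvar
  -- the inclusion of events
  have hsub : ∀ n : ℕ, 1 ≤ n →
      {ω | δ * (1:ℝ) < |Tstat (S n : Set (EuclideanSpace ℝ (Fin n))) (I n) (-(I n))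
          (θ₀ n + σ • ε n ω)|}
      ⊆ ({ω | η * (n:ℝ) < |‖proj (I n) (θ₀ n + σ • ε n ω) - θ₀ n‖ ^ 2|}
          ∪ {ω | η * (n:ℝ) < |‖proj (-(I n)) (θ₀ n + σ • ε n ω) - θ₀ n‖ ^ 2|})
        ∪ (fun ω (i : Fin n) => ε n ω i) ⁻¹' {x : Fin n → ℝ | ∑ i, x i ^ 2 < (n : ℝ) / 2} := by
    intro n hn ω hω
    by_contra hcon
    simp only [Set.mem_union, Set.mem_preimage, Set.mem_setOf_eq, not_or, not_lt] at hcon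
    obtain ⟨⟨hc1, hc2⟩, hc3⟩ := hcon
    simp only [Set.mem_setOf_eq, mul_one] at hω
    set y : EuclideanSpace ℝ (Fin n) := θ₀ n + σ • ε n ω with hy
    have hyθ : y - θ₀ n = σ • ε n ω := by rw [hy]; abel
    set e : ℝ := ‖y - θ₀ n‖ with he
    have he2 : e ^ 2 = σ ^ 2 * ∑ i, (ε n ω i) ^ 2 := by
      rw [he, hyθ, norm_smul, mul_pow, Real.norm_eq_abs, sq_abs, euclidean_norm_sq]
    have hsum : (n : ℝ) / 2 ≤ ∑ i, (ε n ω i) ^ 2 := hc3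
    have he2low : c * n ≤ e ^ 2 := by
      rw [he2, hc]
      nlinarith [mul_le_mul_of_nonneg_left hsum (sq_nonneg σ)]
    have hn0 : (0:ℝ) < n := by exact_mod_cast hn
    have he0 : 0 < e := by nlinarith [norm_nonneg (y - θ₀ n), mul_pos hc0 hn0]
    -- projections
    have hSp := proj_spec (K := (S n : Set (EuclideanSpace ℝ (Fin n))))
      ⟨0, (S n).zero_mem⟩ (S n).closed_of_finiteDimensional (S n).convex y
    have hIp := proj_spec (hne n) (hclosed n) (hconv n) y
    obtain ⟨v, hv⟩ := hne n
    have hDp := proj_spec (K := -(I n)) ⟨-v, Set.neg_mem_neg.mpr hv⟩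
      (hclosed n).neg (hconv n).neg y
    have hABS : ∀ r : ℝ, |r ^ 2| = r ^ 2 := fun r => abs_of_nonneg (sq_nonneg r)
    have hRI2 : ‖proj (I n) y - θ₀ n‖ ^ 2 ≤ η * n := by
      rw [← hABS]
      exact hc1
    have hRD2 : ‖proj (-(I n)) y - θ₀ n‖ ^ 2 ≤ η * n := by
      rw [← hABS]
      exact hc2
    have hse0 : 0 ≤ s * e := mul_nonneg hs0.le he0.le
    have hsq : ∀ r : ℝ, 0 ≤ r → r ^ 2 ≤ η * n → r ≤ s * e := by
      intro r hr h
      have h4 : r ^ 2 ≤ (s * e) ^ 2 := by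
        have h5 : s ^ 2 * (c * n) ≤ s ^ 2 * e ^ 2 :=
          mul_le_mul_of_nonneg_left he2low (sq_nonneg s)
        nlinarith
      have := Real.sqrt_le_sqrt h4
      rwa [Real.sqrt_sq hr, Real.sqrt_sq hse0] at this
    have hRI : ‖proj (I n) y - θ₀ n‖ ≤ s * e := hsq _ (norm_nonneg _) hRI2
    have hRD : ‖proj (-(I n)) y - θ₀ n‖ ≤ s * e := hsq _ (norm_nonneg _) hRD2
    have hIS : ‖y - proj (I n) y‖ ≤ ‖y - proj (S n : Set (EuclideanSpace ℝ (Fin n))) y‖ :=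
      hIp.2 _ (hSI n hSp.1)
    have hdet := det_bound (S n) (θ₀ n) (hθ₀ n) y
      (proj (S n : Set (EuclideanSpace ℝ (Fin n))) y) (proj (I n) y) (proj (-(I n)) y)
      hSp.1 hSp.2 hIS hs0.le hs2 he0 hRI hRD
    -- Tstat value
    by_cases hyS : y ∈ (S n : Set (EuclideanSpace ℝ (Fin n)))
    · have hT0 : Tstat (S n : Set (EuclideanSpace ℝ (Fin n))) (I n) (-(I n)) y = 0 := by
        unfold Tstat
        rw [if_pos hyS]
      rw [hT0] at hω
      simp at hω
      linarith
    · have hTval : Tstat (S n : Set (EuclideanSpace ℝ (Fin n))) (I n) (-(I n)) y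
          = max (‖proj (S n : Set (EuclideanSpace ℝ (Fin n))) y - proj (I n) y‖ ^ 2)
              (‖proj (S n : Set (EuclideanSpace ℝ (Fin n))) y - proj (-(I n)) y‖ ^ 2)
            / ‖y - proj (S n : Set (EuclideanSpace ℝ (Fin n))) y‖ ^ 2 := by
        unfold Tstat
        rw [if_neg hyS]
      have hTnn := Tstat_nonneg (S n : Set (EuclideanSpace ℝ (Fin n))) (I n) (-(I n)) y
      rw [abs_of_nonneg hTnn, hTval] at hω
      rw [hTval] at hTnn
      linarith [hdet]
  -- put everything together
  have hlim : Tendsto (fun n : ℕ =>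
      (ℙ {ω | η * (n:ℝ) < |‖proj (I n) (θ₀ n + σ • ε n ω) - θ₀ n‖ ^ 2|}
        + ℙ {ω | η * (n:ℝ) < |‖proj (-(I n)) (θ₀ n + σ • ε n ω) - θ₀ n‖ ^ 2|})
      + ℙ ((fun ω (i : Fin n) => ε n ω i) ⁻¹' {x : Fin n → ℝ | ∑ i, x i ^ 2 < (n : ℝ) / 2}))
      atTop (nhds 0) := by
    have h := (h1.add h2).add h3
    simpa using h
  refine tendsto_of_tendsto_of_tendsto_of_le_of_le' tendsto_const_nhds hlim
    (Eventually.of_forall fun n => zero_le) ?_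
  filter_upwards [eventually_ge_atTop 1] with n hn
  calc ℙ {ω | δ * (1:ℝ) < |Tstat (S n : Set (EuclideanSpace ℝ (Fin n))) (I n) (-(I n))
        (θ₀ n + σ • ε n ω)|}
      ≤ ℙ (({ω | η * (n:ℝ) < |‖proj (I n) (θ₀ n + σ • ε n ω) - θ₀ n‖ ^ 2|}
          ∪ {ω | η * (n:ℝ) < |‖proj (-(I n)) (θ₀ n + σ • ε n ω) - θ₀ n‖ ^ 2|})
        ∪ (fun ω (i : Fin n) => ε n ω i) ⁻¹' {x : Fin n → ℝ | ∑ i, x i ^ 2 < (n : ℝ) / 2}) :=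
        measure_mono (hsub n hn)
    _ ≤ ℙ ({ω | η * (n:ℝ) < |‖proj (I n) (θ₀ n + σ • ε n ω) - θ₀ n‖ ^ 2|}
          ∪ {ω | η * (n:ℝ) < |‖proj (-(I n)) (θ₀ n + σ • ε n ω) - θ₀ n‖ ^ 2|})
        + ℙ ((fun ω (i : Fin n) => ε n ω i) ⁻¹' {x : Fin n → ℝ | ∑ i, x i ^ 2 < (n : ℝ) / 2}) :=
        measure_union_le _ _
    _ ≤ (ℙ {ω | η * (n:ℝ) < |‖proj (I n) (θ₀ n + σ • ε n ω) - θ₀ n‖ ^ 2|}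
          + ℙ {ω | η * (n:ℝ) < |‖proj (-(I n)) (θ₀ n + σ • ε n ω) - θ₀ n‖ ^ 2|})
        + ℙ ((fun ω (i : Fin n) => ε n ω i) ⁻¹' {x : Fin n → ℝ | ∑ i, x i ^ 2 < (n : ℝ) / 2}) :=
        add_le_add_left (measure_union_le _ _) _
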